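/- Let ℵ = ι − c·(ι∘m∘Δ) : A → A⊗A, where ι(t)=1⊗t. Then A⊗A = ℵ(A) ⊕ Δ(A) as R-modules. -/
import Mathlib


open TensorProduct

noncomputable section

abbrev R : Type := Polynomial ℤ
abbrev A : Type := R × R

/-- The `R`-linear map out of `A = R·1 ⊕ R·X` sending `1 ↦ p` and `X ↦ q`. -/
def lmap {P : Type*} [AddCommGroup P] [Module R P] (p q : P) : A →ₗ[R] P :=
  (LinearMap.toSpanSingleton R P p).coprod (LinearMap.toSpanSingleton R P q)

/-- The basis element `1` of `A`. -/
def one' : A := (1, 0)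

/-- The basis element `X` of `A`. -/
def Xa : A := (0, 1)

/-- Multiplication `m : A ⊗ A → A`, with `1·1 = 1`, `1·X = X·1 = X`, `X² = 0`. -/
def mul : A ⊗[R] A →ₗ[R] A :=
  TensorProduct.lift (lmap LinearMap.id (lmap Xa 0))

/-- Comultiplication `Δ(1) = 1⊗X + X⊗1 + c X⊗X`, `Δ(X) = X⊗X`. -/
def Δ : A →ₗ[R] A ⊗[R] A :=
  lmap (one' ⊗ₜ[R] Xa + Xa ⊗ₜ[R] one' + (Polynomial.X : R) • (Xa ⊗ₜ[R] Xa)) (Xa ⊗ₜ[R] Xa)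

/-- Counit `ε(1) = -c`, `ε(X) = 1`. -/
def ε : A →ₗ[R] R := lmap (-Polynomial.X) 1

/-- `ι : A → A⊗A`, `t ↦ 1⊗t`. -/
def ι : A →ₗ[R] A ⊗[R] A := TensorProduct.mk R A A one'

/-- `ℵ = ι − c·(ι∘m∘Δ)`. -/
def aleph : A →ₗ[R] A ⊗[R] A := ι - (Polynomial.X : R) • (ι ∘ₗ mul ∘ₗ Δ)

/-- Coordinate functional `a ⊗ b ↦ e a * e' b`. -/
def coordAA (e e' : A →ₗ[R] R) : A ⊗[R] A →ₗ[R] R :=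
  TensorProduct.lift (((LinearMap.mul R R) ∘ₗ e).compl₂ e')

abbrev e1 : A →ₗ[R] R := LinearMap.fst R R R
abbrev e2 : A →ₗ[R] R := LinearMap.snd R R R

/-- Retraction onto the `ℵ` part. -/
def fmap : A ⊗[R] A →ₗ[R] A :=
  (coordAA e1 e1).prod (coordAA e1 e2 + ((2 : R) * Polynomial.X) • coordAA e1 e1 - coordAA e2 e1)

/-- Retraction onto the `Δ` part. -/
def gmap : A ⊗[R] A →ₗ[R] A :=
  (coordAA e2 e1).prod (coordAA e2 e2 - (Polynomial.X : R) • coordAA e2 e1)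

lemma coordAA_tmul (e e' : A →ₗ[R] R) (a b : A) :
    coordAA e e' (a ⊗ₜ[R] b) = e a * e' b := by
  simp [coordAA]

lemma fmap_tmul (a b : A) :
    fmap (a ⊗ₜ[R] b)
      = (a.1 * b.1, a.1 * b.2 + 2 * Polynomial.X * (a.1 * b.1) - a.2 * b.1) := by
  simp [fmap, coordAA_tmul, Prod.ext_iff, mul_assoc]

lemma gmap_tmul (a b : A) :
    gmap (a ⊗ₜ[R] b) = (a.2 * b.1, a.2 * b.2 - Polynomial.X * (a.2 * b.1)) := by
  simp [gmap, coordAA_tmul, Prod.ext_iff, mul_assoc]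

lemma lmap_apply {P : Type*} [AddCommGroup P] [Module R P] (p q : P) (x : A) :
    lmap p q x = x.1 • p + x.2 • q := by
  cases x; simp [lmap]

lemma mulΔ (x : A) : mul (Δ x) = ((0 : R), 2 * x.1) := by
  cases' x with x1 x2
  simp only [Δ, mul, lmap_apply, one', Xa, TensorProduct.tmul_add, TensorProduct.add_tmul,
    TensorProduct.smul_tmul', TensorProduct.tmul_smul, map_add, map_smul,
    TensorProduct.lift.tmul, smul_add, smul_smul]
  simp [lmap_apply, Prod.ext_iff]
  ring

lemma aleph_apply (x : A) :
    aleph x = one' ⊗ₜ[R] ((x.1, x.2 - 2 * Polynomial.X * x.1) : A) := by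
  have : aleph x = ι x - (Polynomial.X : R) • ι (mul (Δ x)) := by
    simp only [aleph, LinearMap.sub_apply, LinearMap.smul_apply, LinearMap.comp_apply]
  rw [this, mulΔ]
  cases' x with x1 x2
  simp only [ι, TensorProduct.mk_apply, ← TensorProduct.tmul_smul, ← TensorProduct.tmul_sub]
  congr 1
  simp [Prod.ext_iff, smul_eq_mul]
  ring

lemma Δ_apply (x : A) :
    Δ x = one' ⊗ₜ[R] (((0 : R), x.1) : A)
        + Xa ⊗ₜ[R] ((x.1, Polynomial.X * x.1 + x.2) : A) := by
  cases' x with x1 x2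
  simp only [Δ, lmap_apply]
  simp only [smul_add, smul_smul, ← TensorProduct.tmul_smul]
  rw [add_assoc, ← TensorProduct.tmul_add]
  have h1 : (x1 • Xa : A) = (((0 : R), x1) : A) := by simp [Xa]
  have h2 : (x1 • one' + ((x1 * Polynomial.X) • Xa + x2 • Xa) : A)
      = ((x1, Polynomial.X * x1 + x2) : A) := by
    simp [one', Xa, Prod.ext_iff]; ring
  rw [h1, add_assoc, ← TensorProduct.tmul_add, h2]

lemma hfa (x : A) : fmap (aleph x) = x := by
  rw [aleph_apply, fmap_tmul]
  cases' x with x1 x2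
  simp [one', Prod.ext_iff]

lemma hfd (x : A) : fmap (Δ x) = 0 := by
  rw [Δ_apply, map_add, fmap_tmul, fmap_tmul]
  cases' x with x1 x2
  simp [one', Xa, Prod.ext_iff]

lemma hsum : aleph ∘ₗ fmap + Δ ∘ₗ gmap = LinearMap.id := by
  apply TensorProduct.ext'
  rintro ⟨a1, a2⟩ ⟨b1, b2⟩
  simp only [LinearMap.add_apply, LinearMap.comp_apply, LinearMap.id_apply,
    fmap_tmul, gmap_tmul, aleph_apply, Δ_apply]
  have hR : ((a1, a2) : A) ⊗ₜ[R] ((b1, b2) : A)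
      = one' ⊗ₜ[R] ((a1 * b1, a1 * b2) : A) + Xa ⊗ₜ[R] ((a2 * b1, a2 * b2) : A) := by
    rw [show ((a1, a2) : A) = a1 • one' + a2 • Xa by simp [one', Xa, Prod.ext_iff]]
    rw [TensorProduct.add_tmul, TensorProduct.smul_tmul, TensorProduct.smul_tmul]
    congr 1
  rw [hR, ← add_assoc, ← TensorProduct.tmul_add]
  congr 1 <;> congr 1 <;> simp [Prod.ext_iff] <;> ring

/-- `A⊗A = ℵ(A) ⊕ Δ(A)` as `R`-modules. -/
theorem stmt7 :
    IsCompl (LinearMap.range aleph) (LinearMap.range Δ) := by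
  constructor
  · rw [disjoint_iff]
    ext x
    simp only [Submodule.mem_inf, Submodule.mem_bot, LinearMap.mem_range]
    constructor
    · rintro ⟨⟨a, ha⟩, ⟨b, hb⟩⟩
      have h1 : fmap x = a := by rw [← ha, hfa]
      have h2 : fmap x = 0 := by rw [← hb, hfd]
      rw [← ha, h1.symm.trans h2, map_zero]
    · rintro rfl; exact ⟨⟨0, map_zero _⟩, ⟨0, map_zero _⟩⟩
  · rw [codisjoint_iff, eq_top_iff]
    intro x _
    have h := congrArg (fun φ => φ x) hsum
    simp only [LinearMap.add_apply, LinearMap.comp_apply, LinearMap.id_apply] at h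
    rw [← h]
    exact Submodule.add_mem_sup (LinearMap.mem_range_self _ _) (LinearMap.mem_range_self _ _)
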